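/- Let R be a commutative Noetherian ring and *R the ultrapower of R with respect to an ultrafilter U. Then *R is a faithfully flat R-algebra. -/

import Mathlib

set_option synthInstance.maxHeartbeats 1000000
set_option maxHeartbeats 1000000

open Filter

/-- Let `R` be a commutative Noetherian ring and `*R` its ultrapower with respect to an
ultrafilter `U` (realized as germs along `U`, an `R`-algebra via the diagonal embedding;
the `R`-module structure below is exactly the diagonal one).  Then `*R` is a faithfully
flat `R`-algebra. -/
theorem ultrapower_faithfullyFlat {ι R : Type*} [CommRing R] [IsNoetherianRing R]
    (U : Ultrafilter ι) :
    Module.FaithfullyFlat R (Filter.Germ (U : Filter ι) R) := by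
  classical
  have hflat : Module.Flat R (Filter.Germ (U : Filter ι) R) := by
    rw [Module.Flat.iff_rTensor_injective']
    intro I
    rw [injective_iff_map_eq_zero]
    intro x hx
    obtain ⟨s, rfl⟩ := TensorProduct.exists_finset x
    simp only [map_sum, LinearMap.rTensor_tmul, Submodule.coe_subtype] at hx
    have hx' : ∑ p ∈ s, ((p.1 : R) • p.2) = (0 : Filter.Germ (U : Filter ι) R) := by
      apply_fun (TensorProduct.lid R (Filter.Germ (U : Filter ι) R)) at hx
      simpa [map_sum, TensorProduct.lid_tmul] using hx
    -- choose representatives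
    have hrep : ∀ p : {x // x ∈ s}, ∃ f : ι → R,
        (↑f : Filter.Germ (U : Filter ι) R) = (p : ↥I × Filter.Germ (U : Filter ι) R).2 :=
      fun p => Filter.Germ.inductionOn p.1.2 fun f => ⟨f, rfl⟩
    choose g hg using hrep
    -- the syzygy module
    set φ : ({x // x ∈ s} → R) →ₗ[R] R :=
      Fintype.linearCombination R (fun p : {x // x ∈ s} => ((p : ↥I × Filter.Germ (U : Filter ι) R).1 : R)) with hφ
    set K : Submodule R ({x // x ∈ s} → R) := LinearMap.ker φ with hK
    obtain ⟨Y, hY⟩ : K.FG := IsNoetherian.noetherian K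
    have hYK : ∀ y ∈ Y, φ y = 0 := by
      intro y hy
      have h6 : y ∈ K := by rw [← hY]; exact Submodule.subset_span hy
      exact LinearMap.mem_ker.mp h6
    -- the relation holds eventually
    have hrel : (↑(fun t => ∑ p : {x // x ∈ s}, g p t • ((p : ↥I × Filter.Germ (U : Filter ι) R).1 : R)) :
        Filter.Germ (U : Filter ι) R) = ↑(0 : ι → R) := by
      have e1 : (fun t => ∑ p : {x // x ∈ s}, g p t • ((p : ↥I × Filter.Germ (U : Filter ι) R).1 : R))
          = ∑ p : {x // x ∈ s}, (((p : ↥I × Filter.Germ (U : Filter ι) R).1 : R) • g p) := by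
        funext t
        simp [Finset.sum_apply, smul_eq_mul, mul_comm]
      rw [e1]
      have e2 := map_sum (Filter.Germ.coeRingHom (U : Filter ι) (R := R))
        (fun p : {x // x ∈ s} => (((p : ↥I × Filter.Germ (U : Filter ι) R).1 : R) • g p)) Finset.univ
      rw [show ((∑ p : {x // x ∈ s}, (((p : ↥I × Filter.Germ (U : Filter ι) R).1 : R) • g p) : ι → R) :
          Filter.Germ (U : Filter ι) R) = _ from e2]
      have e3 : ∀ p : {x // x ∈ s}, (Filter.Germ.coeRingHom (U : Filter ι)
          (((p : ↥I × Filter.Germ (U : Filter ι) R).1 : R) • g p) : Filter.Germ (U : Filter ι) R)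
          = ((p : ↥I × Filter.Germ (U : Filter ι) R).1 : R) • p.1.2 := by
        intro p
        show (↑((((p : ↥I × Filter.Germ (U : Filter ι) R).1 : R)) • g p) : Filter.Germ (U : Filter ι) R) = _
        rw [Filter.Germ.coe_smul, hg]
      rw [Finset.sum_congr rfl fun p _ => e3 p]
      rw [Finset.sum_coe_sort s (fun q : ↥I × Filter.Germ (U : Filter ι) R => (q.1 : R) • q.2)]
      simpa using hx'
    have hev : ∀ᶠ t in (U : Filter ι), (fun p : {x // x ∈ s} => g p t) ∈ K := by
      have := Filter.Germ.coe_eq.mp hrel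
      filter_upwards [this] with t ht
      rw [hK, LinearMap.mem_ker, hφ, Fintype.linearCombination_apply]
      simpa using ht
    -- choose coefficients
    have hcoeff : ∀ t : ι, (fun p : {x // x ∈ s} => g p t) ∈ K →
        ∃ c : ({x // x ∈ s} → R) → R, ∑ y ∈ Y, c y • y = (fun p : {x // x ∈ s} => g p t) := by
      intro t ht
      obtain ⟨f, -, hf⟩ := Submodule.mem_span_finset.mp (by rw [hY]; exact ht)
      exact ⟨f, hf⟩
    choose! c hc using hcoeff
    -- the germs of coefficients
    set G : ({x // x ∈ s} → R) → Filter.Germ (U : Filter ι) R :=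
      fun y => (↑(fun t => c t y) : Filter.Germ (U : Filter ι) R) with hG
    -- claim A : each p.2 is a combination of the G y
    have claimA : ∀ p : {x // x ∈ s},
        (p : ↥I × Filter.Germ (U : Filter ι) R).2 = ∑ y ∈ Y, y p • G y := by
      intro p
      rw [← hg p]
      have e4 := map_sum (Filter.Germ.coeRingHom (U : Filter ι) (R := R))
        (fun y : {x // x ∈ s} → R => y p • (fun t => c t y)) Y
      have : (∑ y ∈ Y, y p • G y) = (↑(∑ y ∈ Y, y p • (fun t => c t y)) : Filter.Germ (U : Filter ι) R) := by
        rw [show ((∑ y ∈ Y, y p • (fun t => c t y) : ι → R) : Filter.Germ (U : Filter ι) R) = _ from e4]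
        refine Finset.sum_congr rfl fun y _ => ?_
        show y p • G y = (↑(y p • fun t => c t y) : Filter.Germ (U : Filter ι) R)
        rw [Filter.Germ.coe_smul]
      rw [this]
      apply Filter.Germ.coe_eq.mpr
      filter_upwards [hev] with t ht
      have := hc t ht
      have h5 := congrFun this p
      simp only [Finset.sum_apply, Pi.smul_apply, smul_eq_mul] at h5 ⊢
      rw [← h5]
      exact Finset.sum_congr rfl fun y _ => by ring
    -- now compute the tensor
    rw [← Finset.sum_attach s (fun q => q.1 ⊗ₜ[R] q.2)]
    have : ∀ p : {x // x ∈ s}, ((p : ↥I × Filter.Germ (U : Filter ι) R).1 ⊗ₜ[R] p.1.2 : TensorProduct R (↥I) (Filter.Germ (U : Filter ι) R))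
        = ∑ y ∈ Y, (y p • (p : ↥I × Filter.Germ (U : Filter ι) R).1) ⊗ₜ[R] G y := by
      intro p
      rw [claimA p, TensorProduct.tmul_sum]
      exact Finset.sum_congr rfl fun y _ => by
        rw [TensorProduct.tmul_smul, TensorProduct.smul_tmul']
    rw [show (∑ p ∈ s.attach, p.1.1 ⊗ₜ[R] p.1.2) = ∑ p : {x // x ∈ s}, ∑ y ∈ Y, (y p • p.1.1) ⊗ₜ[R] G y from
      Finset.sum_congr rfl fun p _ => this p]
    rw [Finset.sum_comm]
    refine Finset.sum_eq_zero fun y hy => ?_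
    rw [← TensorProduct.sum_tmul]
    have hz : (∑ p : {x // x ∈ s}, y p • (p : ↥I × Filter.Germ (U : Filter ι) R).1) = (0 : I) := by
      apply Subtype.ext
      push_cast
      simpa [hφ, Fintype.linearCombination_apply] using hYK y hy
    rw [hz, TensorProduct.zero_tmul]
  have hfaith : ∀ ⦃m : Ideal R⦄, m.IsMaximal →
      m • (⊤ : Submodule R (Filter.Germ (U : Filter ι) R)) ≠ ⊤ := by
    intro m hm htop
    haveI : Nontrivial (R ⧸ m) := Ideal.Quotient.nontrivial_iff.mpr hm.ne_top
    set q : R →+* R ⧸ m := Ideal.Quotient.mk m with hq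
    set Φ : Filter.Germ (U : Filter ι) R → Filter.Germ (U : Filter ι) (R ⧸ m) :=
      Filter.Germ.map q with hΦ
    have hadd : ∀ x y : Filter.Germ (U : Filter ι) R, Φ (x + y) = Φ x + Φ y := by
      intro x y
      refine Filter.Germ.inductionOn₂ x y fun f g => ?_
      rw [← Filter.Germ.coe_add, hΦ, Filter.Germ.map_coe, Filter.Germ.map_coe,
        Filter.Germ.map_coe, ← Filter.Germ.coe_add]
      congr 1
    have hkill : ∀ x ∈ (m • (⊤ : Submodule R (Filter.Germ (U : Filter ι) R))), Φ x = 0 := by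
      intro x hx
      refine Submodule.smul_induction_on hx ?_ ?_
      · intro r hr n _
        refine Filter.Germ.inductionOn n fun f => ?_
        have h1 : r • ((f : Filter.Germ (U : Filter ι) R)) = ↑(r • f) :=
          (Filter.Germ.coe_smul r f).symm
        rw [h1, hΦ, Filter.Germ.map_coe]
        have h2 : (q ∘ (r • f)) = (0 : ι → R ⧸ m) := by
          funext t
          simp only [Function.comp, Pi.smul_apply, smul_eq_mul, map_mul, Pi.zero_apply]
          rw [hq]
          simpa using mul_eq_zero_of_left (Ideal.Quotient.eq_zero_iff_mem.mpr hr) _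
        rw [h2, Filter.Germ.coe_zero]
      · intro x y h1 h2
        rw [hadd, h1, h2, add_zero]
    have h1 : (1 : Filter.Germ (U : Filter ι) R) ∈
        m • (⊤ : Submodule R (Filter.Germ (U : Filter ι) R)) := by
      rw [htop]; trivial
    have h2 := hkill 1 h1
    have h3 : Φ 1 = 1 := by
      rw [hΦ, ← Filter.Germ.coe_one, Filter.Germ.map_coe, ← Filter.Germ.coe_one]
      congr 1
    rw [h3] at h2
    exact one_ne_zero h2
  exact { toFlat := hflat, submodule_ne_top := hfaith }
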